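/- For c ∈ ℝ let P'(c) = {y ∈ ℝ⁴ : −y₁−y₂−2y₄ ≤ 1/2, y₁−2y₄ ≤ 1/2, y₂−2y₄ ≤ 1/2, −y₃+3y₄ ≤ c, y₃+3y₄ ≤ c, 6y₄ ≤ 1/2, −6y₄ ≤ 1/2}, and for a compact convex set P ⊆ ℝ⁴ with nonempty interior let b(P) = (∫_P y dy)/(∫_P dy) ∈ ℝ⁴ denote its normalized barycenter. Set c₀ = 1/2 + (1/4)·√(5/7). Then c₀ and 1 − c₀ both lie in (1/4, 3/4), and b(P'(c₀)) + b(P'(1 − c₀)) = 0. -/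

import Mathlib

open MeasureTheory

/-- The polytope `P'(c) ⊆ ℝ⁴` of the divisor `D(c)` after the linear change of
coordinates used in the paper. -/
def Pprime (c : ℝ) : Set (EuclideanSpace ℝ (Fin 4)) :=
  {y | -y 0 - y 1 - 2 * y 3 ≤ 1/2 ∧ y 0 - 2 * y 3 ≤ 1/2 ∧ y 1 - 2 * y 3 ≤ 1/2 ∧
       -y 2 + 3 * y 3 ≤ c ∧ y 2 + 3 * y 3 ≤ c ∧
       6 * y 3 ≤ 1/2 ∧ -(6 * y 3) ≤ 1/2}

/-- The normalized barycenter `b(P) = (∫_P dy)⁻¹ ∫_P y dy` of a set `P ⊆ ℝ⁴`. -/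
noncomputable def bary (P : Set (EuclideanSpace ℝ (Fin 4))) :
    EuclideanSpace ℝ (Fin 4) :=
  (∫ y in P, (1 : ℝ))⁻¹ • ∫ y in P, y


section Aux


/-- One peeling step of Fubini on `Fin (n+1) → ℝ`. -/
lemma peel {n : ℕ} (g : (Fin (n+1) → ℝ) → ℝ) (hg : Integrable g) :
    (∫ x, g x) = ∫ v : Fin n → ℝ, ∫ a : ℝ, g (Fin.cons a v) := by
  have hmp : MeasurePreserving
      ((MeasurableEquiv.piFinSuccAbove (fun _ : Fin (n+1) => ℝ) 0).symm) volume volume :=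
    (volume_preserving_piFinSuccAbove (fun _ : Fin (n + 1) => ℝ) 0).symm _
  have h1 : (∫ x, g x) =
      ∫ p : ℝ × (Fin n → ℝ),
        g ((MeasurableEquiv.piFinSuccAbove (fun _ : Fin (n+1) => ℝ) 0).symm p) :=
    (hmp.integral_comp (MeasurableEquiv.measurableEmbedding _) g).symm
  rw [h1]
  have hig : Integrable
      (fun p : ℝ × (Fin n → ℝ) =>
        g ((MeasurableEquiv.piFinSuccAbove (fun _ : Fin (n+1) => ℝ) 0).symm p)) volume := by
    exact (hmp.integrable_comp_emb (MeasurableEquiv.measurableEmbedding _)).2 hg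
  rw [Measure.volume_eq_prod] at hig ⊢
  rw [integral_prod_symm _ hig]
  congr 1
  ext v
  congr 1
  ext a
  congr 1
  simp [MeasurableEquiv.piFinSuccAbove_symm_apply, Fin.consEquiv, Fin.insertNth_zero]


lemma peel_int {n : ℕ} (g : (Fin (n+1) → ℝ) → ℝ) (hg : Integrable g) :
    Integrable (fun v : Fin n → ℝ => ∫ a : ℝ, g (Fin.cons a v)) := by
  have hmp : MeasurePreserving
      ((MeasurableEquiv.piFinSuccAbove (fun _ : Fin (n+1) => ℝ) 0).symm) volume volume :=
    (volume_preserving_piFinSuccAbove (fun _ : Fin (n + 1) => ℝ) 0).symm _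
  have hig : Integrable
      (fun p : ℝ × (Fin n → ℝ) =>
        g ((MeasurableEquiv.piFinSuccAbove (fun _ : Fin (n+1) => ℝ) 0).symm p)) volume :=
    (hmp.integrable_comp_emb (MeasurableEquiv.measurableEmbedding _)).2 hg
  rw [Measure.volume_eq_prod] at hig
  have h2 := hig.integral_prod_right
  have h3 : (fun v : Fin n → ℝ => ∫ a : ℝ, g (Fin.cons a v)) =
      (fun y : Fin n → ℝ => ∫ x : ℝ,
        g ((MeasurableEquiv.piFinSuccAbove (fun _ : Fin (n+1) => ℝ) 0).symm (x, y))) := by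
    funext v
    congr 1
    funext a
    congr 1
    simp [MeasurableEquiv.piFinSuccAbove_symm_apply, Fin.consEquiv, Fin.insertNth_zero]
  rw [h3]
  exact h2

lemma intFin1 (H : (Fin 1 → ℝ) → ℝ) : (∫ u, H u) = ∫ t : ℝ, H (fun _ => t) := by
  have hmp : MeasurePreserving ((MeasurableEquiv.funUnique (Fin 1) ℝ).symm) volume volume :=
    (volume_preserving_funUnique (Fin 1) ℝ).symm _
  rw [← hmp.integral_comp (MeasurableEquiv.measurableEmbedding _) H]
  rfl

lemma cons_eq_vec (a b z t : ℝ) :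
    (Fin.cons a (Fin.cons b (Fin.cons z (fun _ : Fin 1 => t))) : Fin 4 → ℝ) = ![a, b, z, t] := by
  funext i
  fin_cases i <;> rfl

lemma integral_eq_iterated (g : (Fin 4 → ℝ) → ℝ) (hg : Integrable g) :
    (∫ x, g x) = ∫ t : ℝ, ∫ z : ℝ, ∫ b : ℝ, ∫ a : ℝ, g ![a, b, z, t] := by
  rw [peel g hg]
  rw [peel _ (peel_int g hg)]
  rw [peel _ (peel_int _ (peel_int g hg))]
  rw [intFin1]
  simp only [cons_eq_vec]

lemma step (P : Prop) [Decidable P] (F : ℝ → ℝ) (l u : ℝ) (h : P → l ≤ u) :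
    (∫ a : ℝ, if P ∧ a ∈ Set.Icc l u then F a else 0) =
      if P then ∫ a in l..u, F a else 0 := by
  by_cases hP : P
  · simp only [hP, true_and, if_true]
    have hfun : (fun a : ℝ => if a ∈ Set.Icc l u then F a else 0)
        = (Set.Icc l u).indicator F := by
      funext a; simp [Set.indicator_apply]
    rw [hfun, integral_indicator measurableSet_Icc,
      intervalIntegral.integral_of_le (h hP), ← integral_Icc_eq_integral_Ioc]
  · simp [hP]

lemma ipoly (A B C D E a b : ℝ) :
    (∫ x in a..b, (A + B*x + C*x^2 + D*x^3 + E*x^4)) =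
      A*(b-a) + B*(b^2-a^2)/2 + C*(b^3-a^3)/3 + D*(b^4-a^4)/4 + E*(b^5-a^5)/5 := by
  have key : ∀ x ∈ Set.uIcc a b,
      HasDerivAt (fun x : ℝ => A*x + B*x^2/2 + C*x^3/3 + D*x^4/4 + E*x^5/5)
        (A + B*x + C*x^2 + D*x^3 + E*x^4) x := by
    intro x _
    have h1 : HasDerivAt (fun x : ℝ => A * x) (A * 1) x := (hasDerivAt_id x).const_mul A
    have h2 : HasDerivAt (fun x : ℝ => B * x^2 / 2) (B * ((2:ℕ) * x ^ 1) / 2) x :=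
      ((hasDerivAt_pow 2 x).const_mul B).div_const 2
    have h3 : HasDerivAt (fun x : ℝ => C * x^3 / 3) (C * ((3:ℕ) * x ^ 2) / 3) x :=
      ((hasDerivAt_pow 3 x).const_mul C).div_const 3
    have h4 : HasDerivAt (fun x : ℝ => D * x^4 / 4) (D * ((4:ℕ) * x ^ 3) / 4) x :=
      ((hasDerivAt_pow 4 x).const_mul D).div_const 4
    have h5 : HasDerivAt (fun x : ℝ => E * x^5 / 5) (E * ((5:ℕ) * x ^ 4) / 5) x :=
      ((hasDerivAt_pow 5 x).const_mul E).div_const 5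
    have := (((h1.add h2).add h3).add h4).add h5
    exact this.congr_deriv (by push_cast; ring)
  rw [intervalIntegral.integral_eq_sub_of_hasDerivAt key
    (Continuous.intervalIntegrable (by continuity) a b)]
  ring

def Sc (c : ℝ) : Set (Fin 4 → ℝ) :=
  {x | -x 0 - x 1 - 2 * x 3 ≤ 1/2 ∧ x 0 - 2 * x 3 ≤ 1/2 ∧ x 1 - 2 * x 3 ≤ 1/2 ∧
       -x 2 + 3 * x 3 ≤ c ∧ x 2 + 3 * x 3 ≤ c ∧
       6 * x 3 ≤ 1/2 ∧ -(6 * x 3) ≤ 1/2}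

lemma vec0 (a b z t : ℝ) : (![a,b,z,t] : Fin 4 → ℝ) 0 = a := rfl
lemma vec1 (a b z t : ℝ) : (![a,b,z,t] : Fin 4 → ℝ) 1 = b := rfl
lemma vec2 (a b z t : ℝ) : (![a,b,z,t] : Fin 4 → ℝ) 2 = z := rfl
lemma vec3 (a b z t : ℝ) : (![a,b,z,t] : Fin 4 → ℝ) 3 = t := rfl

lemma mem_Sc (c a b z t : ℝ) :
    ((![a,b,z,t] : Fin 4 → ℝ) ∈ Sc c) ↔
      (((t ∈ Set.Icc (-(1/12) : ℝ) (1/12) ∧ z ∈ Set.Icc (3*t - c) (c - 3*t)) ∧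
        b ∈ Set.Icc (-(1 + 4*t)) (1/2 + 2*t)) ∧
        a ∈ Set.Icc (-(1/2 + 2*t) - b) (1/2 + 2*t)) := by
  simp only [Sc, Set.mem_setOf_eq, vec0, vec1, vec2, vec3, Set.mem_Icc]
  constructor
  · rintro ⟨h1, h2, h3, h4, h5, h6, h7⟩
    exact ⟨⟨⟨⟨by linarith, by linarith⟩, ⟨by linarith, by linarith⟩⟩,
      ⟨by linarith, by linarith⟩⟩, ⟨by linarith, by linarith⟩⟩
  · rintro ⟨⟨⟨⟨h1, h2⟩, ⟨h3, h4⟩⟩, ⟨h5, h6⟩⟩, ⟨h7, h8⟩⟩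
    exact ⟨by linarith, by linarith, by linarith, by linarith, by linarith,
      by linarith, by linarith⟩

lemma isClosed_Sc (c : ℝ) : IsClosed (Sc c) := by
  have h : Sc c = {x : Fin 4 → ℝ | -x 0 - x 1 - 2 * x 3 ≤ 1/2} ∩
      ({x | x 0 - 2 * x 3 ≤ 1/2} ∩ ({x | x 1 - 2 * x 3 ≤ 1/2} ∩
      ({x | -x 2 + 3 * x 3 ≤ c} ∩ ({x | x 2 + 3 * x 3 ≤ c} ∩
      ({x | 6 * x 3 ≤ 1/2} ∩ {x | -(6 * x 3) ≤ 1/2}))))) := rfl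
  rw [h]
  refine IsClosed.inter ?_ (IsClosed.inter ?_ (IsClosed.inter ?_ (IsClosed.inter ?_
    (IsClosed.inter ?_ (IsClosed.inter ?_ ?_))))) <;>
    exact isClosed_le (by fun_prop) (by fun_prop)

lemma measurableSet_Sc (c : ℝ) : MeasurableSet (Sc c) := (isClosed_Sc c).measurableSet

lemma isCompact_Sc (c : ℝ) (hc : c ≤ 3/4) : IsCompact (Sc c) := by
  refine IsCompact.of_isClosed_subset
    (isCompact_univ_pi fun _ => isCompact_Icc (a := (-2:ℝ)) (b := 2))
    (isClosed_Sc c) ?_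
  intro x hx
  obtain ⟨h1, h2, h3, h4, h5, h6, h7⟩ := hx
  intro i _
  fin_cases i
  · show x 0 ∈ Set.Icc (-2 : ℝ) 2; exact ⟨by linarith, by linarith⟩
  · show x 1 ∈ Set.Icc (-2 : ℝ) 2; exact ⟨by linarith, by linarith⟩
  · show x 2 ∈ Set.Icc (-2 : ℝ) 2; exact ⟨by linarith, by linarith⟩
  · show x 3 ∈ Set.Icc (-2 : ℝ) 2; exact ⟨by linarith, by linarith⟩

lemma integrable_ind (c : ℝ) (hc : c ≤ 3/4) (f : (Fin 4 → ℝ) → ℝ) (hf : Continuous f) :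
    Integrable ((Sc c).indicator f) := by
  rw [integrable_indicator_iff (measurableSet_Sc c)]
  exact ContinuousOn.integrableOn_compact (isCompact_Sc c hc) hf.continuousOn

lemma step0 (F : ℝ → ℝ) (l u : ℝ) (h : l ≤ u) :
    (∫ a : ℝ, if a ∈ Set.Icc l u then F a else 0) = ∫ a in l..u, F a := by
  have hfun : (fun a : ℝ => if a ∈ Set.Icc l u then F a else 0)
      = (Set.Icc l u).indicator F := by
    funext a; simp [Set.indicator_apply]
  rw [hfun, integral_indicator measurableSet_Icc,
    intervalIntegral.integral_of_le h, ← integral_Icc_eq_integral_Ioc]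

lemma vol_Sc (c : ℝ) (hc : 1/4 ≤ c) (hc' : c ≤ 3/4) :
    (∫ x, (Sc c).indicator (fun _ => (1:ℝ)) x) = 7*c/18 - 1/48 := by
  rw [integral_eq_iterated _ (integrable_ind c hc' _ continuous_const)]
  have h1 : ∀ t z b : ℝ,
      (∫ a : ℝ, (Sc c).indicator (fun _ => (1:ℝ)) ![a,b,z,t]) =
      if ((t ∈ Set.Icc (-(1/12) : ℝ) (1/12) ∧ z ∈ Set.Icc (3*t - c) (c - 3*t)) ∧
          b ∈ Set.Icc (-(1 + 4*t)) (1/2 + 2*t)) then (1 + 4*t + b) else 0 := by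
    intro t z b
    have e1 : ∀ a : ℝ, (Sc c).indicator (fun _ => (1:ℝ)) ![a,b,z,t] =
        if (((t ∈ Set.Icc (-(1/12) : ℝ) (1/12) ∧ z ∈ Set.Icc (3*t - c) (c - 3*t)) ∧
          b ∈ Set.Icc (-(1 + 4*t)) (1/2 + 2*t)) ∧
          a ∈ Set.Icc (-(1/2 + 2*t) - b) (1/2 + 2*t)) then (1:ℝ) else 0 := by
      intro a
      classical
      rw [Set.indicator_apply]
      exact if_congr (mem_Sc c a b z t) rfl rfl
    simp only [e1]
    rw [step _ (fun _ : ℝ => (1:ℝ)) _ _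
      (fun hP => by obtain ⟨_, hb1, hb2⟩ := hP; linarith)]
    refine if_congr Iff.rfl ?_ rfl
    rw [show (fun _ : ℝ => (1:ℝ)) = (fun x : ℝ => 1 + 0*x + 0*x^2 + 0*x^3 + 0*x^4) from
        funext fun x => by ring, ipoly]
    ring
  simp only [h1]
  have h2 : ∀ t z : ℝ,
      (∫ b : ℝ, if ((t ∈ Set.Icc (-(1/12) : ℝ) (1/12) ∧ z ∈ Set.Icc (3*t - c) (c - 3*t)) ∧
          b ∈ Set.Icc (-(1 + 4*t)) (1/2 + 2*t)) then (1 + 4*t + b) else 0) =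
      if (t ∈ Set.Icc (-(1/12) : ℝ) (1/12) ∧ z ∈ Set.Icc (3*t - c) (c - 3*t)) then
        (9/8 + 9*t + 18*t^2) else 0 := by
    intro t z
    rw [step _ (fun b : ℝ => (1 + 4*t + b)) _ _
      (fun hP => by obtain ⟨⟨ht1, ht2⟩, _⟩ := hP; linarith)]
    refine if_congr Iff.rfl ?_ rfl
    rw [show (fun b : ℝ => (1 + 4*t + b)) = (fun x : ℝ =>
        (1 + 4*t) + 1*x + 0*x^2 + 0*x^3 + 0*x^4) from funext fun x => by ring, ipoly]
    ring
  simp only [h2]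
  have h3 : ∀ t : ℝ,
      (∫ z : ℝ, if (t ∈ Set.Icc (-(1/12) : ℝ) (1/12) ∧ z ∈ Set.Icc (3*t - c) (c - 3*t)) then
        (9/8 + 9*t + 18*t^2) else 0) =
      if t ∈ Set.Icc (-(1/12) : ℝ) (1/12) then
        (9*c/4 + (18*c - 27/4)*t + (36*c - 54)*t^2 - 108*t^3) else 0 := by
    intro t
    rw [step _ (fun _ : ℝ => (9/8 + 9*t + 18*t^2)) _ _
      (fun hP => by obtain ⟨ht1, ht2⟩ := hP; linarith)]
    refine if_congr Iff.rfl ?_ rfl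
    rw [show (fun _ : ℝ => (9/8 + 9*t + 18*t^2)) = (fun x : ℝ =>
        (9/8 + 9*t + 18*t^2) + 0*x + 0*x^2 + 0*x^3 + 0*x^4) from funext fun x => by ring, ipoly]
    ring
  simp only [h3]
  rw [step0 (fun t : ℝ => (9*c/4 + (18*c - 27/4)*t + (36*c - 54)*t^2 - 108*t^3)) _ _
    (by norm_num)]
  rw [show (fun t : ℝ => (9*c/4 + (18*c - 27/4)*t + (36*c - 54)*t^2 - 108*t^3)) = (fun x : ℝ =>
    (9*c/4) + (18*c - 27/4)*x + (36*c - 54)*x^2 + (-108)*x^3 + 0*x^4) from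
    funext fun x => by ring, ipoly]
  ring


lemma mom_Sc0 (c : ℝ) (hc : 1/4 ≤ c) (hc' : c ≤ 3/4) :
    (∫ x, (Sc c).indicator (fun x => x 0) x) = 0 := by
  rw [integral_eq_iterated _ (integrable_ind c hc' _ (continuous_apply 0))]
  have h1 : ∀ t z b : ℝ,
      (∫ a : ℝ, (Sc c).indicator (fun x => x 0) ![a,b,z,t]) =
      if ((t ∈ Set.Icc (-(1/12) : ℝ) (1/12) ∧ z ∈ Set.Icc (3*t - c) (c - 3*t)) ∧ b ∈ Set.Icc (-(1 + 4*t)) (1/2 + 2*t)) then (-(1+4*t)*b/2 - b^2/2) else 0 := by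
    intro t z b
    have e1 : ∀ a : ℝ, (Sc c).indicator (fun x => x 0) ![a,b,z,t] =
        if (((t ∈ Set.Icc (-(1/12) : ℝ) (1/12) ∧ z ∈ Set.Icc (3*t - c) (c - 3*t)) ∧ b ∈ Set.Icc (-(1 + 4*t)) (1/2 + 2*t)) ∧ a ∈ Set.Icc (-(1/2 + 2*t) - b) (1/2 + 2*t)) then (a) else 0 := by
      intro a
      classical
      rw [Set.indicator_apply]
      exact if_congr (mem_Sc c a b z t) rfl rfl
    simp only [e1]
    rw [step _ ((fun a : ℝ => a)) _ _
      (fun hP => by obtain ⟨_, hb1, hb2⟩ := hP; linarith)]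
    refine if_congr Iff.rfl ?_ rfl
    rw [show ((fun a : ℝ => a)) = (fun x : ℝ => 0 + 1*x + 0*x^2 + 0*x^3 + 0*x^4) from funext fun x => by ring, ipoly]
    ring
  simp only [h1]
  have h2 : ∀ t z : ℝ,
      (∫ b : ℝ, if ((t ∈ Set.Icc (-(1/12) : ℝ) (1/12) ∧ z ∈ Set.Icc (3*t - c) (c - 3*t)) ∧ b ∈ Set.Icc (-(1 + 4*t)) (1/2 + 2*t)) then (-(1+4*t)*b/2 - b^2/2) else 0) =
      if (t ∈ Set.Icc (-(1/12) : ℝ) (1/12) ∧ z ∈ Set.Icc (3*t - c) (c - 3*t)) then (0) else 0 := by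
    intro t z
    rw [step _ ((fun b : ℝ => -(1+4*t)*b/2 - b^2/2)) _ _
      (fun hP => by obtain ⟨⟨ht1, ht2⟩, _⟩ := hP; linarith)]
    refine if_congr Iff.rfl ?_ rfl
    rw [show ((fun b : ℝ => -(1+4*t)*b/2 - b^2/2)) = (fun x : ℝ => 0 + (-(1+4*t)/2)*x + (-(1/2))*x^2 + 0*x^3 + 0*x^4) from funext fun x => by ring, ipoly]
    ring
  simp only [h2]
  simp only [ite_self, integral_zero]

lemma mom_Sc1 (c : ℝ) (hc : 1/4 ≤ c) (hc' : c ≤ 3/4) :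
    (∫ x, (Sc c).indicator (fun x => x 1) x) = 0 := by
  rw [integral_eq_iterated _ (integrable_ind c hc' _ (continuous_apply 1))]
  have h1 : ∀ t z b : ℝ,
      (∫ a : ℝ, (Sc c).indicator (fun x => x 1) ![a,b,z,t]) =
      if ((t ∈ Set.Icc (-(1/12) : ℝ) (1/12) ∧ z ∈ Set.Icc (3*t - c) (c - 3*t)) ∧ b ∈ Set.Icc (-(1 + 4*t)) (1/2 + 2*t)) then ((1+4*t)*b + b^2) else 0 := by
    intro t z b
    have e1 : ∀ a : ℝ, (Sc c).indicator (fun x => x 1) ![a,b,z,t] =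
        if (((t ∈ Set.Icc (-(1/12) : ℝ) (1/12) ∧ z ∈ Set.Icc (3*t - c) (c - 3*t)) ∧ b ∈ Set.Icc (-(1 + 4*t)) (1/2 + 2*t)) ∧ a ∈ Set.Icc (-(1/2 + 2*t) - b) (1/2 + 2*t)) then (b) else 0 := by
      intro a
      classical
      rw [Set.indicator_apply]
      exact if_congr (mem_Sc c a b z t) rfl rfl
    simp only [e1]
    rw [step _ ((fun _ : ℝ => b)) _ _
      (fun hP => by obtain ⟨_, hb1, hb2⟩ := hP; linarith)]
    refine if_congr Iff.rfl ?_ rfl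
    rw [show ((fun _ : ℝ => b)) = (fun x : ℝ => b + 0*x + 0*x^2 + 0*x^3 + 0*x^4) from funext fun x => by ring, ipoly]
    ring
  simp only [h1]
  have h2 : ∀ t z : ℝ,
      (∫ b : ℝ, if ((t ∈ Set.Icc (-(1/12) : ℝ) (1/12) ∧ z ∈ Set.Icc (3*t - c) (c - 3*t)) ∧ b ∈ Set.Icc (-(1 + 4*t)) (1/2 + 2*t)) then ((1+4*t)*b + b^2) else 0) =
      if (t ∈ Set.Icc (-(1/12) : ℝ) (1/12) ∧ z ∈ Set.Icc (3*t - c) (c - 3*t)) then (0) else 0 := by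
    intro t z
    rw [step _ ((fun b : ℝ => (1+4*t)*b + b^2)) _ _
      (fun hP => by obtain ⟨⟨ht1, ht2⟩, _⟩ := hP; linarith)]
    refine if_congr Iff.rfl ?_ rfl
    rw [show ((fun b : ℝ => (1+4*t)*b + b^2)) = (fun x : ℝ => 0 + (1+4*t)*x + 1*x^2 + 0*x^3 + 0*x^4) from funext fun x => by ring, ipoly]
    ring
  simp only [h2]
  simp only [ite_self, integral_zero]

lemma mom_Sc2 (c : ℝ) (hc : 1/4 ≤ c) (hc' : c ≤ 3/4) :
    (∫ x, (Sc c).indicator (fun x => x 2) x) = 0 := by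
  rw [integral_eq_iterated _ (integrable_ind c hc' _ (continuous_apply 2))]
  have h1 : ∀ t z b : ℝ,
      (∫ a : ℝ, (Sc c).indicator (fun x => x 2) ![a,b,z,t]) =
      if ((t ∈ Set.Icc (-(1/12) : ℝ) (1/12) ∧ z ∈ Set.Icc (3*t - c) (c - 3*t)) ∧ b ∈ Set.Icc (-(1 + 4*t)) (1/2 + 2*t)) then ((1+4*t)*z + z*b) else 0 := by
    intro t z b
    have e1 : ∀ a : ℝ, (Sc c).indicator (fun x => x 2) ![a,b,z,t] =
        if (((t ∈ Set.Icc (-(1/12) : ℝ) (1/12) ∧ z ∈ Set.Icc (3*t - c) (c - 3*t)) ∧ b ∈ Set.Icc (-(1 + 4*t)) (1/2 + 2*t)) ∧ a ∈ Set.Icc (-(1/2 + 2*t) - b) (1/2 + 2*t)) then (z) else 0 := by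
      intro a
      classical
      rw [Set.indicator_apply]
      exact if_congr (mem_Sc c a b z t) rfl rfl
    simp only [e1]
    rw [step _ ((fun _ : ℝ => z)) _ _
      (fun hP => by obtain ⟨_, hb1, hb2⟩ := hP; linarith)]
    refine if_congr Iff.rfl ?_ rfl
    rw [show ((fun _ : ℝ => z)) = (fun x : ℝ => z + 0*x + 0*x^2 + 0*x^3 + 0*x^4) from funext fun x => by ring, ipoly]
    ring
  simp only [h1]
  have h2 : ∀ t z : ℝ,
      (∫ b : ℝ, if ((t ∈ Set.Icc (-(1/12) : ℝ) (1/12) ∧ z ∈ Set.Icc (3*t - c) (c - 3*t)) ∧ b ∈ Set.Icc (-(1 + 4*t)) (1/2 + 2*t)) then ((1+4*t)*z + z*b) else 0) =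
      if (t ∈ Set.Icc (-(1/12) : ℝ) (1/12) ∧ z ∈ Set.Icc (3*t - c) (c - 3*t)) then ((9/8 + 9*t + 18*t^2)*z) else 0 := by
    intro t z
    rw [step _ ((fun b : ℝ => (1+4*t)*z + z*b)) _ _
      (fun hP => by obtain ⟨⟨ht1, ht2⟩, _⟩ := hP; linarith)]
    refine if_congr Iff.rfl ?_ rfl
    rw [show ((fun b : ℝ => (1+4*t)*z + z*b)) = (fun x : ℝ => ((1+4*t)*z) + z*x + 0*x^2 + 0*x^3 + 0*x^4) from funext fun x => by ring, ipoly]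
    ring
  simp only [h2]
  have h3 : ∀ t : ℝ,
      (∫ z : ℝ, if (t ∈ Set.Icc (-(1/12) : ℝ) (1/12) ∧ z ∈ Set.Icc (3*t - c) (c - 3*t)) then ((9/8 + 9*t + 18*t^2)*z) else 0) =
      if t ∈ Set.Icc (-(1/12) : ℝ) (1/12) then (0:ℝ) else 0 := by
    intro t
    rw [step _ (fun z : ℝ => (9/8 + 9*t + 18*t^2)*z) _ _
      (fun hP => by obtain ⟨ht1, ht2⟩ := hP; linarith)]
    refine if_congr Iff.rfl ?_ rfl
    rw [show (fun z : ℝ => (9/8 + 9*t + 18*t^2)*z) = (fun x : ℝ =>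
        0 + (9/8 + 9*t + 18*t^2)*x + 0*x^2 + 0*x^3 + 0*x^4) from funext fun x => by ring, ipoly]
    ring
  simp only [h3, ite_self, integral_zero]

lemma mom_Sc3 (c : ℝ) (hc : 1/4 ≤ c) (hc' : c ≤ 3/4) :
    (∫ x, (Sc c).indicator (fun x => x 3) x) = c/144 - 1/360 := by
  rw [integral_eq_iterated _ (integrable_ind c hc' _ (continuous_apply 3))]
  have h1 : ∀ t z b : ℝ,
      (∫ a : ℝ, (Sc c).indicator (fun x => x 3) ![a,b,z,t]) =
      if ((t ∈ Set.Icc (-(1/12) : ℝ) (1/12) ∧ z ∈ Set.Icc (3*t - c) (c - 3*t)) ∧ b ∈ Set.Icc (-(1 + 4*t)) (1/2 + 2*t)) then ((1+4*t)*t + t*b) else 0 := by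
    intro t z b
    have e1 : ∀ a : ℝ, (Sc c).indicator (fun x => x 3) ![a,b,z,t] =
        if (((t ∈ Set.Icc (-(1/12) : ℝ) (1/12) ∧ z ∈ Set.Icc (3*t - c) (c - 3*t)) ∧ b ∈ Set.Icc (-(1 + 4*t)) (1/2 + 2*t)) ∧ a ∈ Set.Icc (-(1/2 + 2*t) - b) (1/2 + 2*t)) then (t) else 0 := by
      intro a
      classical
      rw [Set.indicator_apply]
      exact if_congr (mem_Sc c a b z t) rfl rfl
    simp only [e1]
    rw [step _ ((fun _ : ℝ => t)) _ _
      (fun hP => by obtain ⟨_, hb1, hb2⟩ := hP; linarith)]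
    refine if_congr Iff.rfl ?_ rfl
    rw [show ((fun _ : ℝ => t)) = (fun x : ℝ => t + 0*x + 0*x^2 + 0*x^3 + 0*x^4) from funext fun x => by ring, ipoly]
    ring
  simp only [h1]
  have h2 : ∀ t z : ℝ,
      (∫ b : ℝ, if ((t ∈ Set.Icc (-(1/12) : ℝ) (1/12) ∧ z ∈ Set.Icc (3*t - c) (c - 3*t)) ∧ b ∈ Set.Icc (-(1 + 4*t)) (1/2 + 2*t)) then ((1+4*t)*t + t*b) else 0) =
      if (t ∈ Set.Icc (-(1/12) : ℝ) (1/12) ∧ z ∈ Set.Icc (3*t - c) (c - 3*t)) then (9*t/8 + 9*t^2 + 18*t^3) else 0 := by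
    intro t z
    rw [step _ ((fun b : ℝ => (1+4*t)*t + t*b)) _ _
      (fun hP => by obtain ⟨⟨ht1, ht2⟩, _⟩ := hP; linarith)]
    refine if_congr Iff.rfl ?_ rfl
    rw [show ((fun b : ℝ => (1+4*t)*t + t*b)) = (fun x : ℝ => ((1+4*t)*t) + t*x + 0*x^2 + 0*x^3 + 0*x^4) from funext fun x => by ring, ipoly]
    ring
  simp only [h2]
  have h3 : ∀ t : ℝ,
      (∫ z : ℝ, if (t ∈ Set.Icc (-(1/12) : ℝ) (1/12) ∧ z ∈ Set.Icc (3*t - c) (c - 3*t)) then (9*t/8 + 9*t^2 + 18*t^3) else 0) =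
      if t ∈ Set.Icc (-(1/12) : ℝ) (1/12) then ((9*c/4)*t + (18*c - 27/4)*t^2 + (36*c - 54)*t^3 - 108*t^4) else 0 := by
    intro t
    rw [step _ (fun _ : ℝ => (9*t/8 + 9*t^2 + 18*t^3)) _ _
      (fun hP => by obtain ⟨ht1, ht2⟩ := hP; linarith)]
    refine if_congr Iff.rfl ?_ rfl
    rw [show (fun _ : ℝ => (9*t/8 + 9*t^2 + 18*t^3)) = (fun x : ℝ =>
        (9*t/8 + 9*t^2 + 18*t^3) + 0*x + 0*x^2 + 0*x^3 + 0*x^4) from funext fun x => by ring, ipoly]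
    ring
  simp only [h3]
  rw [step0 (fun t : ℝ => ((9*c/4)*t + (18*c - 27/4)*t^2 + (36*c - 54)*t^3 - 108*t^4)) _ _
    (by norm_num)]
  rw [show (fun t : ℝ => ((9*c/4)*t + (18*c - 27/4)*t^2 + (36*c - 54)*t^3 - 108*t^4)) =
    (fun x : ℝ => 0 + (9*c/4)*x + (18*c - 27/4)*x^2 + (36*c - 54)*x^3 + (-108)*x^4) from
    funext fun x => by ring, ipoly]
  ring


lemma preimage_Pprime (c : ℝ) :
    (⇑(MeasurableEquiv.toLp 2 (Fin 4 → ℝ))) ⁻¹' Pprime c = Sc c := rfl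

lemma setIntegral_Pprime (c : ℝ) (f : EuclideanSpace ℝ (Fin 4) → ℝ)
    (g : (Fin 4 → ℝ) → ℝ)
    (hfg : ∀ x : Fin 4 → ℝ, f ((MeasurableEquiv.toLp 2 (Fin 4 → ℝ)) x) = g x) :
    (∫ y in Pprime c, f y) = ∫ x in Sc c, g x := by
  rw [← ((EuclideanSpace.volume_preserving_symm_measurableEquiv_toLp (Fin 4)).symm _).setIntegral_preimage_emb
    (MeasurableEquiv.measurableEmbedding _) f (Pprime c), MeasurableEquiv.symm_symm, preimage_Pprime]
  exact setIntegral_congr_fun (measurableSet_Sc c) fun x _ => hfg x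

lemma setint_to_ind (c : ℝ) (g : (Fin 4 → ℝ) → ℝ) :
    (∫ x in Sc c, g x) = ∫ x, (Sc c).indicator g x :=
  (integral_indicator (measurableSet_Sc c)).symm

lemma vol_Pprime (c : ℝ) (hc : 1/4 ≤ c) (hc' : c ≤ 3/4) :
    (∫ y in Pprime c, (1:ℝ)) = 7*c/18 - 1/48 := by
  rw [setIntegral_Pprime c _ (fun _ => (1:ℝ)) (fun _ => rfl), setint_to_ind]
  exact vol_Sc c hc hc'

lemma isCompact_Pprime (c : ℝ) (hc' : c ≤ 3/4) : IsCompact (Pprime c) := by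
  have h : Pprime c = ⇑(PiLp.continuousLinearEquiv 2 ℝ (fun _ : Fin 4 => ℝ)) ⁻¹' Sc c := rfl
  rw [h]
  exact ((PiLp.continuousLinearEquiv 2 ℝ (fun _ : Fin 4 => ℝ)).toHomeomorph.isCompact_preimage).2
    (isCompact_Sc c hc')

lemma measurableSet_Pprime (c : ℝ) : MeasurableSet (Pprime c) := by
  have h : Pprime c = (⇑(MeasurableEquiv.toLp 2 (Fin 4 → ℝ))) '' Sc c := by
    rw [← preimage_Pprime c, Set.image_preimage_eq _ (MeasurableEquiv.surjective _)]
  rw [h]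
  exact (MeasurableEquiv.measurableEmbedding _).measurableSet_image.2 (measurableSet_Sc c)

lemma integrableOn_id_Pprime (c : ℝ) (hc' : c ≤ 3/4) :
    IntegrableOn (fun y => y) (Pprime c) (volume : Measure (EuclideanSpace ℝ (Fin 4))) :=
  ContinuousOn.integrableOn_compact (isCompact_Pprime c hc') continuous_id.continuousOn

lemma mom_Pprime (c : ℝ) (hc : 1/4 ≤ c) (hc' : c ≤ 3/4) (i : Fin 4) :
    (∫ y in Pprime c, y) i = if i = 3 then c/144 - 1/360 else 0 := by
  have hproj : (EuclideanSpace.proj i) (∫ y in Pprime c, y)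
      = ∫ y in Pprime c, (EuclideanSpace.proj i) y :=
    (ContinuousLinearMap.integral_comp_comm _ (integrableOn_id_Pprime c hc')).symm
  have happ : (EuclideanSpace.proj i) (∫ y in Pprime c, y) = (∫ y in Pprime c, y) i := rfl
  rw [← happ, hproj]
  have hstep : (∫ y in Pprime c, (EuclideanSpace.proj i) y) = ∫ x in Sc c, x i :=
    setIntegral_Pprime c _ (fun x => x i) (fun _ => rfl)
  rw [hstep, setint_to_ind]
  fin_cases i
  · simpa using mom_Sc0 c hc hc'
  · simpa using mom_Sc1 c hc hc'
  · simpa using mom_Sc2 c hc hc'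
  · simpa using mom_Sc3 c hc hc'


end Aux

/-- The barycenter identity verifying the criterion of Theorem 1.2 for the
decomposition in Corollary 1.3: for `c₀ = 1/2 + (1/4)√(5/7)`, both `c₀` and
`1 − c₀` lie in `(1/4, 3/4)` and `b(P'(c₀)) + b(P'(1 − c₀)) = 0`. -/

theorem stmt15 (c₀ : ℝ) (hc₀ : c₀ = 1/2 + (1/4) * Real.sqrt (5/7)) :
    c₀ ∈ Set.Ioo (1/4 : ℝ) (3/4) ∧ (1 - c₀) ∈ Set.Ioo (1/4 : ℝ) (3/4) ∧
      bary (Pprime c₀) + bary (Pprime (1 - c₀)) = 0 := by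
  have hr2 : Real.sqrt (5/7) ^ 2 = 5/7 := Real.sq_sqrt (by norm_num)
  have hr0 : (0:ℝ) ≤ Real.sqrt (5/7) := Real.sqrt_nonneg _
  set r := Real.sqrt (5/7) with hr
  have hr1 : r < 1 := by nlinarith
  have hc1 : 1/4 ≤ c₀ := by rw [hc₀]; linarith
  have hc2 : c₀ ≤ 3/4 := by rw [hc₀]; linarith
  have hd1 : 1/4 ≤ 1 - c₀ := by rw [hc₀]; linarith
  have hd2 : 1 - c₀ ≤ 3/4 := by rw [hc₀]; linarith
  refine ⟨⟨by rw [hc₀]; linarith, by rw [hc₀]; linarith⟩,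
    ⟨by rw [hc₀]; linarith, by rw [hc₀]; linarith⟩, ?_⟩
  ext i
  show (bary (Pprime c₀)) i + (bary (Pprime (1 - c₀))) i = 0
  have hb : ∀ (c : ℝ), 1/4 ≤ c → c ≤ 3/4 →
      (bary (Pprime c)) i = (7*c/18 - 1/48)⁻¹ * (if i = 3 then c/144 - 1/360 else 0) := by
    intro c h1 h2
    have : (bary (Pprime c)) i
        = (∫ y in Pprime c, (1:ℝ))⁻¹ * ((∫ y in Pprime c, y) i) := rfl
    rw [this, vol_Pprime c h1 h2, mom_Pprime c h1 h2 i]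
  rw [hb c₀ hc1 hc2, hb (1 - c₀) hd1 hd2]
  by_cases hi : i = 3
  · rw [if_pos hi, if_pos hi]
    have hVa : (0:ℝ) < 7*c₀/18 - 1/48 := by rw [hc₀]; linarith
    have hVb : (0:ℝ) < 7*(1-c₀)/18 - 1/48 := by rw [hc₀]; linarith
    have key : (c₀/144 - 1/360) * (7*(1-c₀)/18 - 1/48)
        + ((1-c₀)/144 - 1/360) * (7*c₀/18 - 1/48) = 0 := by
      rw [hc₀]; linear_combination (-(7:ℝ)/20736) * hr2
    rw [inv_mul_eq_div, inv_mul_eq_div, div_add_div _ _ (ne_of_gt hVa) (ne_of_gt hVb),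
      div_eq_zero_iff]
    left
    linear_combination key
  · simp [hi]
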